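/- Let Δ' be an edge-colouring of the complete graph G on vertex set V with a distinguished vertex x', using m colours in total, and suppose some vertex v ∈ V\{x'} satisfies ρ(v) ≥ (1+α)√(2m) for a real α > 0. Then |G'_Δ'(G)| ≥ (1+α)√(2m), where G'_Δ'(G) = { γ(S) : x' ∈ S ⊆ V } and γ(S) counts the colours (including the colour of x') on edges inside S. -/

import Mathlib

/-- The set of colours appearing on edges inside `S`. -/
def colorsIn {V : Type*} (Δ' : V → V → ℕ) (S : Set V) : Set ℕ :=
  {c | ∃ x ∈ S, ∃ y ∈ S, x ≠ y ∧ Δ' x y = c}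

/-- `γ(S)` for a special colouring: the number of colours on edges inside `S`
together with the colour `cx` of the special vertex. -/
noncomputable def gammaSp {V : Type*} (Δ' : V → V → ℕ) (cx : ℕ) (S : Set V) : ℕ :=
  ({cx} ∪ colorsIn Δ' S).ncard

/-- `G'_{Δ'}(G)`: all values `γ(S)` over sets `S` containing the special vertex. -/
def GSet {V : Type*} (Δ' : V → V → ℕ) (cx : ℕ) (x' : V) : Set ℕ :=
  {k | ∃ S : Set V, x' ∈ S ∧ gammaSp Δ' cx S = k}

/-- `ρ(v)`: the colours other than the special colour `cx` that appear only on
edges incident with `v`. -/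
def rhoSet {V : Type*} (Δ' : V → V → ℕ) (cx : ℕ) (v : V) : Set ℕ :=
  {c | c ≠ cx ∧ (∃ y, y ≠ v ∧ Δ' v y = c) ∧
    ∀ x y, x ≠ y → Δ' x y = c → x = v ∨ y = v}

/-- If some vertex `v ≠ x'` of a special `m`-colouring satisfies
`ρ(v) ≥ (1+α)√(2m)`, then `|G'_{Δ'}(G)| ≥ (1+α)√(2m)`. -/
theorem stmt16 {V : Type*} [Fintype V] [DecidableEq V] (x' : V) (cx : ℕ)
    (Δ' : V → V → ℕ) (hsym : ∀ x y, Δ' x y = Δ' y x)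
    (m : ℕ) (hm : ({cx} ∪ colorsIn Δ' (Set.univ : Set V)).ncard = m)
    (α : ℝ) (hα : 0 < α)
    (v : V) (hv : v ≠ x')
    (hρ : (1 + α) * Real.sqrt (2 * m) ≤ ((rhoSet Δ' cx v).ncard : ℝ)) :
    (1 + α) * Real.sqrt (2 * m) ≤ ((GSet Δ' cx x').ncard : ℝ) := by
  classical
  -- colour sets are finite
  have hfinIn : ∀ S : Set V, (colorsIn Δ' S).Finite := by
    intro S
    apply Set.Finite.subset (Set.finite_range (fun p : V × V => Δ' p.1 p.2))
    rintro c ⟨x, -, y, -, -, h⟩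
    exact ⟨(x, y), h⟩
  have hfinG : ∀ S : Set V, (({cx} : Set ℕ) ∪ colorsIn Δ' S).Finite :=
    fun S => (Set.finite_singleton cx).union (hfinIn S)
  -- GSet is finite
  have hGle : ∀ S : Set V, gammaSp Δ' cx S ≤ m := by
    intro S
    rw [← hm]
    refine Set.ncard_le_ncard (Set.union_subset_union_right _ ?_) (hfinG _)
    rintro c ⟨x, -, y, -, hxy, h⟩
    exact ⟨x, trivial, y, trivial, hxy, h⟩
  have hGfin : (GSet Δ' cx x').Finite := by
    apply Set.Finite.subset (Set.finite_Iic m)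
    rintro k ⟨S, -, rfl⟩
    exact hGle S
  -- rhoSet is finite
  have hRfin : (rhoSet Δ' cx v).Finite := by
    apply Set.Finite.subset (Set.finite_range (Δ' v))
    rintro c ⟨-, ⟨y, -, h⟩, -⟩
    exact ⟨y, h⟩
  -- remove the possibly problematic colour on the edge v x'
  set R' : Set ℕ := rhoSet Δ' cx v \ {Δ' v x'} with hR'def
  have hR'fin : R'.Finite := hRfin.diff
  set k := R'.ncard with hkdef
  have hFcard : hR'fin.toFinset.card = k := by
    rw [hkdef, Set.ncard_eq_toFinset_card _ hR'fin]
  -- enumeration of R'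
  set g : Fin k → ℕ := fun j => ((hR'fin.toFinset.orderIsoOfFin hFcard) j : ℕ) with hgdef
  have hgmem : ∀ j, g j ∈ R' := by
    intro j
    have := ((hR'fin.toFinset.orderIsoOfFin hFcard) j).2
    rwa [Set.Finite.mem_toFinset] at this
  have hgsm : ∀ {i j : Fin k}, i < j → g i < g j := by
    intro i j hij
    exact_mod_cast (hR'fin.toFinset.orderIsoOfFin hFcard).strictMono hij
  -- witnesses
  have hwit : ∀ c : ℕ, ∃ y : V, c ∈ R' → y ≠ v ∧ Δ' v y = c := by
    intro c
    by_cases hc : c ∈ R'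
    · obtain ⟨-, ⟨y, hy1, hy2⟩, -⟩ := hc.1
      exact ⟨y, fun _ => ⟨hy1, hy2⟩⟩
    · exact ⟨v, fun h => absurd h hc⟩
  choose w hw using hwit
  -- the chain of sets
  set S : ℕ → Set V := fun i =>
    insert x' (insert v {u | ∃ j : Fin k, (j : ℕ) < i ∧ u = w (g j)}) with hSdef
  have hSmono : ∀ {i j : ℕ}, i ≤ j → S i ⊆ S j := by
    intro i j hij u hu
    rcases hu with h | h | ⟨l, hl, rfl⟩
    · exact Or.inl h
    · exact Or.inr (Or.inl h)
    · exact Or.inr (Or.inr ⟨l, lt_of_lt_of_le hl hij, rfl⟩)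
  have hColMono : ∀ {A B : Set V}, A ⊆ B → colorsIn Δ' A ⊆ colorsIn Δ' B := by
    rintro A B hAB c ⟨x, hx, y, hy, hxy, h⟩
    exact ⟨x, hAB hx, y, hAB hy, hxy, h⟩
  -- strict step
  have hstep : ∀ i : ℕ, i < k → gammaSp Δ' cx (S i) < gammaSp Δ' cx (S (i + 1)) := by
    intro i hik
    set c := g ⟨i, hik⟩ with hcdef
    have hcR' : c ∈ R' := hgmem _
    have hcρ : c ∈ rhoSet Δ' cx v := hcR'.1
    have hwv : w c ≠ v := (hw c hcR').1
    have hwc : Δ' v (w c) = c := (hw c hcR').2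
    apply Set.ncard_lt_ncard _ (hfinG _)
    constructor
    · exact Set.union_subset_union_right _ (hColMono (hSmono (Nat.le_succ i)))
    · intro hsub
      have hcmem : c ∈ ({cx} : Set ℕ) ∪ colorsIn Δ' (S (i + 1)) := by
        refine Or.inr ⟨v, Or.inr (Or.inl rfl), w c,
          Or.inr (Or.inr ⟨⟨i, hik⟩, Nat.lt_succ_self i, rfl⟩), Ne.symm hwv, hwc⟩
      have hcold := hsub hcmem
      rcases hcold with hc1 | hc2
      · exact hcρ.1 (by simpa using hc1)
      · obtain ⟨x, hx, y, hy, hxy, hxyc⟩ := hc2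
        -- the edge of colour c must be incident to v
        have hinc := hcρ.2.2 x y hxy hxyc
        -- reduce to the case x = v
        have : ∃ u, u ∈ S i ∧ u ≠ v ∧ Δ' v u = c := by
          rcases hinc with h | h
          · exact ⟨y, hy, fun he => hxy (h.trans he.symm), h ▸ hxyc⟩
          · exact ⟨x, hx, fun he => hxy (he.trans h.symm), (hsym v x).trans (h ▸ hxyc)⟩
        obtain ⟨u, hu, huv, huc⟩ := this
        rcases hu with rfl | rfl | ⟨l, hl, rfl⟩
        · exact hcR'.2 (by simpa using huc.symm)
        · exact huv rfl
        · have hlc : Δ' v (w (g l)) = g l := (hw _ (hgmem l)).2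
          have : g l = c := by rw [← hlc, huc]
          have hlt : g l < c := hgsm (show l < ⟨i, hik⟩ from Fin.lt_def.mpr hl)
          omega
  -- strict monotonicity on [0,k]
  have hlt : ∀ j : ℕ, j ≤ k → ∀ i : ℕ, i < j → gammaSp Δ' cx (S i) < gammaSp Δ' cx (S j) := by
    intro j
    induction j with
    | zero => intro _ i hi; omega
    | succ n ih =>
      intro hn i hi
      rcases Nat.lt_or_ge i n with h | h
      · exact lt_trans (ih (Nat.le_of_succ_le hn) i h) (hstep n (Nat.lt_of_succ_le hn))
      · have : i = n := by omega
        subst this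
        exact hstep i (Nat.lt_of_succ_le hn)
  -- collect k+1 distinct values of γ in GSet
  set f : ℕ → ℕ := fun i => gammaSp Δ' cx (S i) with hfdef
  have hcard : ((Finset.range (k + 1)).image f).card = k + 1 := by
    rw [Finset.card_image_of_injOn, Finset.card_range]
    intro a ha b hb hab
    simp only [Finset.coe_range, Set.mem_Iio] at ha hb
    by_contra hne
    rcases lt_or_gt_of_ne hne with h | h
    · exact absurd hab (Nat.ne_of_lt (hlt b (by omega) a h))
    · exact absurd hab.symm (Nat.ne_of_lt (hlt a (by omega) b h))
  have hsub : ↑((Finset.range (k + 1)).image f) ⊆ GSet Δ' cx x' := by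
    intro y hy
    simp only [Finset.coe_image, Finset.coe_range, Set.mem_image, Set.mem_Iio] at hy
    obtain ⟨i, -, rfl⟩ := hy
    exact ⟨S i, Or.inl rfl, rfl⟩
  have hGk : k + 1 ≤ (GSet Δ' cx x').ncard := by
    calc k + 1 = ((Finset.range (k + 1)).image f).card := hcard.symm
    _ = (((Finset.range (k + 1)).image f : Finset ℕ) : Set ℕ).ncard := by
        rw [Set.ncard_coe_finset]
    _ ≤ (GSet Δ' cx x').ncard := Set.ncard_le_ncard hsub hGfin
  -- ρ(v) ≤ k+1
  have hRk : (rhoSet Δ' cx v).ncard ≤ k + 1 := by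
    have hsub2 : rhoSet Δ' cx v ⊆ R' ∪ {Δ' v x'} := by
      intro c hc
      by_cases h : c = Δ' v x'
      · exact Or.inr (by simp [h])
      · exact Or.inl ⟨hc, by simpa using h⟩
    calc (rhoSet Δ' cx v).ncard ≤ (R' ∪ {Δ' v x'}).ncard :=
          Set.ncard_le_ncard hsub2 (hR'fin.union (Set.finite_singleton _))
    _ ≤ R'.ncard + ({Δ' v x'} : Set ℕ).ncard := Set.ncard_union_le _ _
    _ = k + 1 := by rw [Set.ncard_singleton]
  -- conclude
  have : (rhoSet Δ' cx v).ncard ≤ (GSet Δ' cx x').ncard := le_trans hRk hGk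
  exact hρ.trans (by exact_mod_cast this)
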